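/- arXiv:2006.14816 — 2 statements merged into one kernel-verified Lean document; each statement's English description precedes it below -/
import Mathlib

section
/- Let V be a finite random variable with {γ = 0} ⊆ {V = 0}, and let X_t = V·1_{t≥γ}. Then X has locally integrable variation, i.e. there exists a sequence of 𝔽-stopping times T_n with T_n ↑ ∞ a.s. such that E(Var(X^{T_n})_∞) < ∞ for each n, if and only if E(|V|·1_{γ≤t}) < ∞ for every t ∈ 𝒯. -/
open MeasureTheory Filter Set Topology
open scoped ENNReal NNReal Classical

noncomputable section

namespace SingleJump

variable {Ω : Type*}

/-- The event `{γ > t}`. -/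
def jumpSet (γ : Ω → ℝ≥0∞) (t : ℝ≥0) : Set Ω := {ω | (t : ℝ≥0∞) < γ ω}

/-- The collection `𝒻_t` of the single jump filtration generated by `γ` and the σ-field `m`:
`A ∈ 𝒻_t` iff `A` is `m`-measurable and `A ∩ {γ > t}` is either `∅` or `{γ > t}`. -/
def jumpColl (m : MeasurableSpace Ω) (γ : Ω → ℝ≥0∞) (t : ℝ≥0) : Set (Set Ω) :=
  {A | MeasurableSet[m] A ∧ (A ∩ jumpSet γ t = ∅ ∨ A ∩ jumpSet γ t = jumpSet γ t)}

/-- `𝒻_t` as a σ-field (the collection `jumpColl` generates itself, see Proposition 1(i)). -/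
def jumpσ (m : MeasurableSpace Ω) (γ : Ω → ℝ≥0∞) (t : ℝ≥0) : MeasurableSpace Ω :=
  MeasurableSpace.generateFrom (jumpColl m γ t)

/-- `𝒻_∞ = σ(⋃_{t ∈ ℝ₊} 𝒻_t)`. -/
def jumpσInf (m : MeasurableSpace Ω) (γ : Ω → ℝ≥0∞) : MeasurableSpace Ω :=
  ⨆ t : ℝ≥0, jumpσ m γ t

/-- A real function on `ℝ≥0` is càdlàg: right-continuous everywhere, finite left limits. -/
def Cadlag (f : ℝ≥0 → ℝ) : Prop :=
  (∀ t, ContinuousWithinAt f (Ici t) t) ∧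
    ∀ t : ℝ≥0, 0 < t → ∃ c : ℝ, Tendsto f (𝓝[<] t) (𝓝 c)

/-- The filter of times `t ∈ ℝ≥0` with `t ↑ a` strictly from the left (this is `atTop`
when `a = ∞`). -/
def leftF (a : ℝ≥0∞) : Filter ℝ≥0 := Filter.comap (fun t : ℝ≥0 => (t : ℝ≥0∞)) (𝓝[<] a)

/-- Total variation of `f` over `[0,∞)`, including `|f 0|` (the paper's convention `Var`). -/
def totalVar (f : ℝ≥0 → ℝ) : ℝ≥0∞ := (‖f 0‖₊ : ℝ≥0∞) + eVariationOn f Set.univ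

/-- The process `M` stopped at the (possibly infinite) random time `T`. -/
def stopped (M : ℝ≥0 → Ω → ℝ) (T : Ω → ℝ≥0∞) : ℝ≥0 → Ω → ℝ :=
  fun t ω => M (((t : ℝ≥0∞) ⊓ T ω).toNNReal) ω

section WithMeasurableSpace

variable [m : MeasurableSpace Ω]

/-- `Ḡ(t) = 1 - G(t) = P(γ > t)`. -/
def Gbar (μ : Measure Ω) (γ : Ω → ℝ≥0∞) (t : ℝ≥0) : ℝ :=
  (μ {ω | (t : ℝ≥0∞) < γ ω}).toReal

/-- `Ḡ(t-) = P(γ ≥ t)`, the left-hand limit of `Ḡ` at `t`. -/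
def GbarLeft (μ : Measure Ω) (γ : Ω → ℝ≥0∞) (t : ℝ≥0) : ℝ :=
  (μ {ω | (t : ℝ≥0∞) ≤ γ ω}).toReal

/-- `t_G = sup {t ∈ ℝ₊ : G(t) < 1}`, the right endpoint of the law of `γ`. -/
def tG (μ : Measure Ω) (γ : Ω → ℝ≥0∞) : ℝ≥0∞ :=
  sSup ((fun t : ℝ≥0 => (t : ℝ≥0∞)) '' {t : ℝ≥0 | μ {ω | γ ω ≤ (t : ℝ≥0∞)} < 1})

/-- `𝒯 = {t ∈ ℝ₊ : P(γ ≥ t) > 0}`. -/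
def TT (μ : Measure Ω) (γ : Ω → ℝ≥0∞) : Set ℝ≥0 :=
  {t | 0 < μ {ω | (t : ℝ≥0∞) ≤ γ ω}}

/-- Case A: `P(γ = t_G < ∞) = 0`. -/
def CaseA (μ : Measure Ω) (γ : Ω → ℝ≥0∞) : Prop :=
  μ {ω | γ ω = tG μ γ ∧ tG μ γ < ⊤} = 0

/-- Case B: `P(γ = t_G < ∞) > 0`. -/
def CaseB (μ : Measure Ω) (γ : Ω → ℝ≥0∞) : Prop :=
  0 < μ {ω | γ ω = tG μ γ ∧ tG μ γ < ⊤}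

/-- `z ∈ L¹_loc(dG)` : `z` is Borel and `∫_{[0,t]} |z(s)| dG(s) < ∞` for every `t ∈ 𝒯`,
where `dG` is the law of `γ` (a measure on `[0,∞]`). -/
def MemL1loc (μ : Measure Ω) (γ : Ω → ℝ≥0∞) (z : ℝ≥0 → ℝ) : Prop :=
  Measurable z ∧ ∀ t ∈ TT μ γ,
    IntegrableOn (fun x : ℝ≥0∞ => z x.toNNReal) (Icc 0 (t : ℝ≥0∞)) (μ.map γ)

/-- `F loc≪ G` with density `z = dF/dG` : `F(t) = F(0) + ∫_(0,t] z(s) dG(s)` for `t < t_G`. -/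
def LocAC (μ : Measure Ω) (γ : Ω → ℝ≥0∞) (F z : ℝ≥0 → ℝ) : Prop :=
  MemL1loc μ γ z ∧ ∀ t : ℝ≥0, (t : ℝ≥0∞) < tG μ γ →
    F t = F 0 + ∫ x in Ioc (0 : ℝ≥0∞) (t : ℝ≥0∞), z x.toNNReal ∂(μ.map γ)

/-- Condition M for the pair `(F, H)`. -/
def CondM (μ : Measure Ω) (γ : Ω → ℝ≥0∞) (F H : ℝ≥0 → ℝ) : Prop :=
  (∃ z, LocAC μ γ F z) ∧ MemL1loc μ γ H ∧
  (∀ t : ℝ≥0, (t : ℝ≥0∞) < tG μ γ →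
    F t * Gbar μ γ t + ∫ x in Ioc (0 : ℝ≥0∞) (t : ℝ≥0∞), H x.toNNReal ∂(μ.map γ)
      = F 0 * Gbar μ γ 0) ∧
  (CaseB μ γ → Tendsto F (leftF (tG μ γ)) (𝓝 (H (tG μ γ).toNNReal)))

/-- A stopping time of the single jump filtration: `{T ≤ t} ∈ 𝒻_t` for all `t ∈ ℝ₊`. -/
def IsSJStoppingTime (γ : Ω → ℝ≥0∞) (T : Ω → ℝ≥0∞) : Prop :=
  ∀ t : ℝ≥0, {ω | T ω ≤ (t : ℝ≥0∞)} ∈ jumpColl m γ t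

/-- The martingale property on a set `S` of times, w.r.t. the single jump filtration. -/
def MartingaleOn (μ : Measure Ω) (γ : Ω → ℝ≥0∞) (M : ℝ≥0 → Ω → ℝ) (S : Set ℝ≥0) : Prop :=
  (∀ t ∈ S, Measurable[jumpσ m γ t] (M t)) ∧ (∀ t ∈ S, Integrable (M t) μ) ∧
    ∀ s ∈ S, ∀ t ∈ S, s ≤ t → μ[M t|jumpσ m γ s] =ᵐ[μ] M s

/-- A uniformly integrable martingale w.r.t. the single jump filtration. -/
def UIMartingale (μ : Measure Ω) (γ : Ω → ℝ≥0∞) (M : ℝ≥0 → Ω → ℝ) : Prop :=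
  MartingaleOn μ γ M Set.univ ∧ UniformIntegrable M 1 μ

/-- A local martingale w.r.t. the single jump filtration: adapted, a.s. càdlàg paths, and
there are stopping times `T n ↑ ∞` a.s. with each stopped process a UI martingale. -/
def LocalMartingale (μ : Measure Ω) (γ : Ω → ℝ≥0∞) (M : ℝ≥0 → Ω → ℝ) : Prop :=
  (∀ t : ℝ≥0, Measurable[jumpσ m γ t] (M t)) ∧
  (∀ᵐ ω ∂μ, Cadlag fun t => M t ω) ∧
  ∃ T : ℕ → Ω → ℝ≥0∞,
    (∀ n, IsSJStoppingTime γ (T n)) ∧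
    (∀ᵐ ω ∂μ, Monotone (fun n => T n ω) ∧ Tendsto (fun n => T n ω) atTop (𝓝 (⊤ : ℝ≥0∞))) ∧
    ∀ n, UIMartingale μ γ (stopped M (T n))

/-- `E[L' | γ] = 0` for a (possibly only locally integrable) random variable `L'`. -/
def CondZeroGivenGamma (μ : Measure Ω) (γ : Ω → ℝ≥0∞) (L' : Ω → ℝ) : Prop :=
  ∀ B : Set ℝ≥0∞, MeasurableSet B → IntegrableOn L' (γ ⁻¹' B) μ →
    ∫ ω in γ ⁻¹' B, L' ω ∂μ = 0


/-! ### Auxiliary lemmas for Lemma 1 -/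

/-- The variation of a single-step function is at most the jump size. -/
private lemma evar_step_le (a : ℝ≥0∞) (v : ℝ) :
    eVariationOn (fun t : ℝ≥0 => if (t : ℝ≥0∞) < a then (0:ℝ) else v) Set.univ
      ≤ (‖v‖₊ : ℝ≥0∞) := by
  apply iSup_le
  rintro ⟨n, ⟨u, hu, -⟩⟩
  set χ : ℝ≥0 → ℝ := fun t => if (t : ℝ≥0∞) < a then (0:ℝ) else 1 with hχdef
  have hχ0 : ∀ t, 0 ≤ χ t := by
    intro t; by_cases h : (t : ℝ≥0∞) < a <;> simp [χ, h]
  have hχ1 : ∀ t, χ t ≤ 1 := by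
    intro t; by_cases h : (t : ℝ≥0∞) < a <;> simp [χ, h]
  have hχmono : Monotone χ := by
    intro s t hst
    by_cases h : (t : ℝ≥0∞) < a
    · have hs : (s : ℝ≥0∞) < a := lt_of_le_of_lt (by exact_mod_cast hst) h
      simp [χ, h, hs]
    · simp only [χ, if_neg h]
      exact (hχ1 s).trans_eq (by by_cases hs : (s : ℝ≥0∞) < a <;> simp [hs])
  have hfeq : (fun t : ℝ≥0 => if (t : ℝ≥0∞) < a then (0:ℝ) else v) = fun t => v * χ t := by
    funext t; by_cases h : (t : ℝ≥0∞) < a <;> simp [χ, h]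
  rw [hfeq]
  have hterm : ∀ i : ℕ, edist (v * χ (u (i+1))) (v * χ (u i))
      = ENNReal.ofReal (|v| * (χ (u (i+1)) - χ (u i))) := by
    intro i
    rw [edist_dist, Real.dist_eq]
    congr 1
    rw [← mul_sub, abs_mul, abs_of_nonneg (sub_nonneg.2 (hχmono (hu (Nat.le_succ i))))]
  calc
    (∑ i ∈ Finset.range n, edist ((fun t => v * χ t) (u (i + 1))) ((fun t => v * χ t) (u i)))
        = ∑ i ∈ Finset.range n, ENNReal.ofReal (|v| * (χ (u (i+1)) - χ (u i))) := by
          exact Finset.sum_congr rfl fun i _ => hterm i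
    _ = ENNReal.ofReal (∑ i ∈ Finset.range n, |v| * (χ (u (i+1)) - χ (u i))) := by
          rw [ENNReal.ofReal_sum_of_nonneg]
          intro i _
          exact mul_nonneg (abs_nonneg v) (sub_nonneg.2 (hχmono (hu (Nat.le_succ i))))
    _ = ENNReal.ofReal (|v| * (χ (u n) - χ (u 0))) := by
          rw [← Finset.mul_sum, Finset.sum_range_sub (fun i => χ (u i))]
    _ ≤ ENNReal.ofReal (|v| * 1) := by
          apply ENNReal.ofReal_le_ofReal
          exact mul_le_mul_of_nonneg_left
            (by linarith [hχ1 (u n), hχ0 (u 0)]) (abs_nonneg v)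
    _ = (‖v‖₊ : ℝ≥0∞) := by
          rw [mul_one, ← Real.norm_eq_abs]; exact ENNReal.ofReal_eq_coe_nnreal _

/-- Any value of `f` is dominated by `totalVar f`. -/
private lemma le_totalVar (f : ℝ≥0 → ℝ) (s : ℝ≥0) : (‖f s‖₊ : ℝ≥0∞) ≤ totalVar f := by
  have h1 : edist (f s) (f 0) ≤ eVariationOn f Set.univ :=
    eVariationOn.edist_le f (Set.mem_univ s) (Set.mem_univ 0)
  have h2 : (‖f s‖₊ : ℝ≥0∞) ≤ (‖f 0‖₊ : ℝ≥0∞) + edist (f s) (f 0) := by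
    rw [edist_eq_enorm_sub, enorm_eq_nnnorm, ← ENNReal.coe_add, ENNReal.coe_le_coe]
    calc ‖f s‖₊ = ‖f 0 + (f s - f 0)‖₊ := by rw [add_sub_cancel]
      _ ≤ ‖f 0‖₊ + ‖f s - f 0‖₊ := nnnorm_add_le _ _
  exact h2.trans (add_le_add_right h1 _)

/-- Total variation of a single-step function. -/
private lemma totalVar_step (a : ℝ≥0∞) (v : ℝ) (h0 : a = 0 → v = 0) :
    totalVar (fun t : ℝ≥0 => if (t : ℝ≥0∞) < a then (0:ℝ) else v)
      = if a ≠ ⊤ then (‖v‖₊ : ℝ≥0∞) else 0 := by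
  by_cases ha : a = ⊤
  · subst ha
    rw [if_neg (by simp)]
    have hf : (fun t : ℝ≥0 => if (t : ℝ≥0∞) < (⊤:ℝ≥0∞) then (0:ℝ) else v)
        = fun _ : ℝ≥0 => (0:ℝ) := by
      funext t; rw [if_pos ENNReal.coe_lt_top]
    rw [hf, totalVar]
    simp [eVariationOn.constant_on (by simp : ((fun _ : ℝ≥0 => (0:ℝ)) '' Set.univ).Subsingleton)]
  · rw [if_pos ha]
    have hf0 : (if ((0:ℝ≥0) : ℝ≥0∞) < a then (0:ℝ) else v) = 0 := by
      rcases eq_or_lt_of_le (show (0:ℝ≥0∞) ≤ a from zero_le) with h | h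
      · rw [if_neg (by rw [← h]; simp), h0 h.symm]
      · rw [if_pos (by simpa using h)]
    apply le_antisymm
    · rw [totalVar]
      calc (‖if ((0:ℝ≥0) : ℝ≥0∞) < a then (0:ℝ) else v‖₊ : ℝ≥0∞)
            + eVariationOn (fun t : ℝ≥0 => if (t : ℝ≥0∞) < a then (0:ℝ) else v) Set.univ
          ≤ 0 + (‖v‖₊ : ℝ≥0∞) := add_le_add (by rw [hf0]; simp) (evar_step_le a v)
        _ = (‖v‖₊ : ℝ≥0∞) := zero_add _
    · have := le_totalVar (fun t : ℝ≥0 => if (t : ℝ≥0∞) < a then (0:ℝ) else v) a.toNNReal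
      rwa [if_neg (by rw [ENNReal.coe_toNNReal ha]; exact lt_irrefl a)] at this

/-- Total variation of the stopped single-jump process. -/
private lemma totalVar_stopped (γ : Ω → ℝ≥0∞) (V : Ω → ℝ) (hV0 : ∀ ω, γ ω = 0 → V ω = 0)
    (T : Ω → ℝ≥0∞) (ω : Ω) :
    totalVar (fun t => stopped (fun (t : ℝ≥0) (ω : Ω) =>
        if (t : ℝ≥0∞) < γ ω then (0:ℝ) else V ω) T t ω)
      = if γ ω ≤ T ω ∧ γ ω ≠ ⊤ then (‖V ω‖₊ : ℝ≥0∞) else 0 := by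
  have hpath : (fun t => stopped (fun (t : ℝ≥0) (ω : Ω) =>
        if (t : ℝ≥0∞) < γ ω then (0:ℝ) else V ω) T t ω)
      = fun t : ℝ≥0 =>
        if (t : ℝ≥0∞) < (if γ ω ≤ T ω then γ ω else ⊤) then (0:ℝ) else V ω := by
    funext t
    have hne : (t : ℝ≥0∞) ⊓ T ω ≠ ⊤ := ne_top_of_le_ne_top ENNReal.coe_ne_top inf_le_left
    simp only [stopped, ENNReal.coe_toNNReal hne]
    by_cases hT : γ ω ≤ T ω
    · rw [if_pos hT]
      congr 1
      rw [inf_lt_iff, eq_iff_iff]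
      exact ⟨fun h => h.resolve_right fun h' => absurd hT (not_le.2 h'), Or.inl⟩
    · rw [if_neg hT, if_pos ENNReal.coe_lt_top,
        if_pos (inf_lt_iff.2 (Or.inr (not_le.1 hT)))]
  rw [hpath, totalVar_step]
  · congr 1
    rw [eq_iff_iff]
    by_cases hT : γ ω ≤ T ω
    · simp only [if_pos hT]
      exact ⟨fun h => ⟨hT, h⟩, fun h => h.2⟩
    · simp only [if_neg hT]
      constructor
      · intro h; exact absurd rfl h
      · intro h; exact absurd h.1 hT
  · intro h
    by_cases hT : γ ω ≤ T ω
    · exact hV0 ω (by rwa [if_pos hT] at h)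
    · rw [if_neg hT] at h; exact absurd h (by simp)

/-- Every stopping time of the single jump filtration has a deterministic threshold `c`:
strictly before `γ` it has not yet happened below `c` and it is `≤ c` on `{γ > c}`. -/
private lemma exists_threshold {γ T : Ω → ℝ≥0∞} (hT : IsSJStoppingTime γ T) :
    ∃ c : ℝ≥0∞, (∀ ω, γ ω ≤ c → γ ω ≤ T ω) ∧ (∀ ω, c < γ ω → T ω ≤ c) := by
  classical
  set S : Set ℝ≥0 := {u | jumpSet γ u ⊆ {ω | T ω ≤ (u : ℝ≥0∞)}} with hS
  set c : ℝ≥0∞ := ⨅ (u : ℝ≥0) (_ : u ∈ S), (u : ℝ≥0∞) with hc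
  have hF1 : ∀ u : ℝ≥0, c < (u : ℝ≥0∞) → jumpSet γ u ⊆ {ω | T ω ≤ (u : ℝ≥0∞)} := by
    intro u hu ω hω
    rw [hc, iInf_lt_iff] at hu
    obtain ⟨u', hu'⟩ := hu
    rw [iInf_lt_iff] at hu'
    obtain ⟨hu'S, hu'lt⟩ := hu'
    have h1 : ω ∈ jumpSet γ u' := by
      simp only [jumpSet, Set.mem_setOf_eq] at hω ⊢
      exact lt_trans hu'lt hω
    exact le_trans (hu'S h1) hu'lt.le
  have hF2 : ∀ u : ℝ≥0, (u : ℝ≥0∞) < c → ∀ ω, ω ∈ jumpSet γ u → ¬ T ω ≤ (u : ℝ≥0∞) := by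
    intro u hu ω hω hTω
    rcases (hT u).2 with h | h
    · have hmem : ω ∈ {ω | T ω ≤ (u : ℝ≥0∞)} ∩ jumpSet γ u := ⟨hTω, hω⟩
      rw [h] at hmem
      exact hmem
    · have huS : u ∈ S := fun ω' hω' => (Set.inter_eq_right.mp h) hω'
      have : c ≤ (u : ℝ≥0∞) := by
        rw [hc]
        exact iInf_le_of_le u (iInf_le_of_le huS le_rfl)
      exact absurd hu (not_lt.2 this)
  refine ⟨c, ?_, ?_⟩
  · intro ω hγc
    apply ENNReal.le_of_forall_nnreal_lt
    intro r hr
    have hrc : (r : ℝ≥0∞) < c := hr.trans_le hγc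
    have hω : ω ∈ jumpSet γ r := hr
    exact (not_le.1 (hF2 r hrc ω hω)).le
  · intro ω hcγ
    by_contra h
    have hcT : c < T ω := not_le.1 h
    have hinf : c < T ω ⊓ γ ω := lt_inf_iff.2 ⟨hcT, hcγ⟩
    obtain ⟨r, hr1, hr2⟩ := ENNReal.lt_iff_exists_nnreal_btwn.1 hinf
    have hrγ : ω ∈ jumpSet γ r := lt_of_lt_of_le hr2 inf_le_right
    have := hF1 r hr1 hrγ
    exact absurd (lt_of_le_of_lt this (lt_of_lt_of_le hr2 inf_le_left)) (lt_irrefl _)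

/-- **Lemma 1.** For `X_t = V·1_{t≥γ}` with `{γ = 0} ⊆ {V = 0}`, the process `X` has
locally integrable variation iff `E(|V|·1_{γ≤t}) < ∞` for every `t ∈ 𝒯`. -/
theorem stmt_17 (μ : Measure Ω) [IsProbabilityMeasure μ] (γ : Ω → ℝ≥0∞)
    (hγ : Measurable γ) (hpos : 0 < μ {ω | 0 < γ ω})
    (V : Ω → ℝ) (hV : Measurable V) (hV0 : ∀ ω, γ ω = 0 → V ω = 0)
    (X : ℝ≥0 → Ω → ℝ)
    (hX : X = fun (t : ℝ≥0) (ω : Ω) => if (t : ℝ≥0∞) < γ ω then 0 else V ω) :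
    (∃ T : ℕ → Ω → ℝ≥0∞,
        (∀ n, IsSJStoppingTime γ (T n)) ∧
        (∀ᵐ ω ∂μ, Monotone (fun n => T n ω) ∧
          Tendsto (fun n => T n ω) atTop (𝓝 (⊤ : ℝ≥0∞))) ∧
        ∀ n, ∫⁻ ω, totalVar (fun t => stopped X (T n) t ω) ∂μ < ⊤) ↔
      (∀ t ∈ TT μ γ,
        Integrable (fun ω => ({ω' | γ ω' ≤ (t : ℝ≥0∞)}.indicator V) ω) μ) := by
  subst hX
  constructor
  · rintro ⟨T, hTst, hTae, hTvar⟩ t ht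
    choose c hc1 hc2 using fun n => exists_threshold (hTst n)
    have ht' : 0 < μ {ω | (t : ℝ≥0∞) ≤ γ ω} := ht
    have hex : ∃ n, (t : ℝ≥0∞) ≤ c n := by
      by_contra hcon
      push_neg at hcon
      have hP0 : μ {ω | ¬ (Monotone (fun n => T n ω) ∧
          Tendsto (fun n => T n ω) atTop (𝓝 (⊤:ℝ≥0∞)))} = 0 := ae_iff.1 hTae
      have hμne : μ ({ω | (t : ℝ≥0∞) ≤ γ ω} ∩ {ω | Monotone (fun n => T n ω) ∧
          Tendsto (fun n => T n ω) atTop (𝓝 (⊤:ℝ≥0∞))}) ≠ 0 := by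
        intro h0
        have hsub : {ω | (t : ℝ≥0∞) ≤ γ ω} ⊆
            ({ω | (t : ℝ≥0∞) ≤ γ ω} ∩ {ω | Monotone (fun n => T n ω) ∧
              Tendsto (fun n => T n ω) atTop (𝓝 (⊤:ℝ≥0∞))}) ∪
            {ω | ¬ (Monotone (fun n => T n ω) ∧
              Tendsto (fun n => T n ω) atTop (𝓝 (⊤:ℝ≥0∞)))} := by
          intro ω hω
          by_cases hP : Monotone (fun n => T n ω) ∧
            Tendsto (fun n => T n ω) atTop (𝓝 (⊤:ℝ≥0∞))
          · exact Or.inl ⟨hω, hP⟩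
          · exact Or.inr hP
        have hle := (measure_mono (μ := μ) hsub).trans (measure_union_le _ _)
        rw [h0, hP0, zero_add] at hle
        exact absurd (le_antisymm hle zero_le) (ne_of_gt ht')
      have hne := nonempty_of_measure_ne_zero hμne
      obtain ⟨ω, hωγ, -, hωtend⟩ := hne
      obtain ⟨k, hk⟩ :=
        (hωtend.eventually (eventually_gt_nhds (ENNReal.coe_lt_top (r := t)))).exists
      exact absurd hk (not_lt.2 ((hc2 k ω ((hcon k).trans_le hωγ)).trans (hcon k).le))
    obtain ⟨n, hcn⟩ := hex
    have hms : MeasurableSet {ω' | γ ω' ≤ (t : ℝ≥0∞)} := hγ measurableSet_Iic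
    refine ⟨(hV.indicator hms).aestronglyMeasurable, ?_⟩
    have hle : ∀ ω, ((‖({ω' | γ ω' ≤ (t : ℝ≥0∞)}.indicator V) ω‖₊ : ℝ≥0∞))
        ≤ totalVar (fun s => stopped
            (fun (t : ℝ≥0) (ω : Ω) => if (t : ℝ≥0∞) < γ ω then (0:ℝ) else V ω) (T n) s ω) := by
      intro ω
      rw [totalVar_stopped γ V hV0]
      by_cases hω : γ ω ≤ (t : ℝ≥0∞)
      · rw [Set.indicator_of_mem (show ω ∈ {ω' | γ ω' ≤ (t : ℝ≥0∞)} from hω) V,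
          if_pos ⟨hc1 n ω (hω.trans hcn), (hω.trans_lt ENNReal.coe_lt_top).ne⟩]
      · rw [Set.indicator_of_notMem
          (show ω ∉ {ω' | γ ω' ≤ (t : ℝ≥0∞)} from hω) V]
        simp
    exact lt_of_le_of_lt (lintegral_mono hle) (hTvar n)
  · intro hInt
    have hseq : ∃ ts : ℕ → ℝ≥0, (∀ n, ts n ∈ TT μ γ) ∧ Monotone ts ∧
        (∀ᵐ ω ∂μ, (∃ n, γ ω ≤ (ts n : ℝ≥0∞)) ∨
          Tendsto (fun n => ((ts n : ℝ≥0) : ℝ≥0∞)) atTop (𝓝 ⊤)) := by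
      by_cases hb : ∃ u : ℝ≥0, μ {ω | (u : ℝ≥0∞) ≤ γ ω} = 0
      · obtain ⟨u₀, hu₀⟩ := hb
        set s : ℝ≥0 := sInf {u : ℝ≥0 | μ {ω | (u : ℝ≥0∞) ≤ γ ω} = 0} with hs
        have hSne : {u : ℝ≥0 | μ {ω | (u : ℝ≥0∞) ≤ γ ω} = 0}.Nonempty := ⟨u₀, hu₀⟩
        have hmem_lt : ∀ u : ℝ≥0, u < s → 0 < μ {ω | (u : ℝ≥0∞) ≤ γ ω} := by
          intro u hu
          rcases eq_or_ne (μ {ω | (u : ℝ≥0∞) ≤ γ ω}) 0 with h | h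
          · exact absurd (csInf_le (OrderBot.bddBelow _)
              (show u ∈ {u : ℝ≥0 | μ {ω | (u : ℝ≥0∞) ≤ γ ω} = 0} from h)) (not_le.2 hu)
          · exact pos_iff_ne_zero.2 h
        have hnull_gt : ∀ u : ℝ≥0, s < u → μ {ω | (u : ℝ≥0∞) ≤ γ ω} = 0 := by
          intro u hu
          obtain ⟨v, hv, hvu⟩ := exists_lt_of_csInf_lt hSne hu
          exact measure_mono_null (fun ω h => le_trans (ENNReal.coe_le_coe.2 hvu.le) h) hv
        have hae_gt : μ {ω | (s : ℝ≥0∞) < γ ω} = 0 := by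
          have hsub : {ω | (s : ℝ≥0∞) < γ ω} ⊆
              ⋃ k : ℕ, {ω | ((s + 1/(k+1) : ℝ≥0) : ℝ≥0∞) ≤ γ ω} := by
            intro ω hω
            obtain ⟨r, hr1, hr2⟩ := ENNReal.lt_iff_exists_nnreal_btwn.1 hω
            have hsr : s < r := ENNReal.coe_lt_coe.1 hr1
            obtain ⟨k, hk⟩ := exists_nat_one_div_lt (tsub_pos_of_lt hsr)
            refine Set.mem_iUnion.2 ⟨k, ?_⟩
            have hler : s + 1/((k:ℝ≥0)+1) ≤ r := by
              calc s + 1/((k:ℝ≥0)+1) ≤ s + (r - s) := add_le_add_right hk.le s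
                _ = r := add_tsub_cancel_of_le hsr.le
            exact Set.mem_setOf.2 (le_trans (ENNReal.coe_le_coe.2 hler) hr2.le)
          refine measure_mono_null hsub (measure_iUnion_null fun k => hnull_gt _ ?_)
          exact lt_add_of_pos_right s (by positivity)
        by_cases hns : μ {ω | (s : ℝ≥0∞) ≤ γ ω} = 0
        · have hs0 : 0 < s := by
            rcases (show (0:ℝ≥0) ≤ s from zero_le).eq_or_lt with h | h
            · exfalso
              have h0 : μ {ω | ((0:ℝ≥0) : ℝ≥0∞) ≤ γ ω} = 0 := by rw [h]; exact hns
              rw [(by ext ω; simp : {ω | ((0:ℝ≥0) : ℝ≥0∞) ≤ γ ω} = Set.univ),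
                measure_univ] at h0
              exact one_ne_zero h0
            · exact h
          obtain ⟨ts, hsm, hmem, htend⟩ := exists_seq_strictMono_tendsto' hs0
          refine ⟨ts, fun n => hmem_lt _ (hmem n).2, hsm.monotone, ?_⟩
          have hae : ∀ᵐ ω ∂μ, ¬ ((s : ℝ≥0∞) ≤ γ ω) := by
            rw [ae_iff]; simpa using hns
          filter_upwards [hae] with ω hω
          left
          obtain ⟨r, hr1, hr2⟩ := ENNReal.lt_iff_exists_nnreal_btwn.1 (not_le.1 hω)
          obtain ⟨n, hn⟩ :=
            (htend.eventually (eventually_ge_nhds (ENNReal.coe_lt_coe.1 hr2))).exists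
          exact ⟨n, hr1.le.trans (ENNReal.coe_le_coe.2 hn)⟩
        · refine ⟨fun _ => s, fun n => pos_iff_ne_zero.2 hns, monotone_const, ?_⟩
          have hae : ∀ᵐ ω ∂μ, ¬ ((s : ℝ≥0∞) < γ ω) := by
            rw [ae_iff]; simpa using hae_gt
          filter_upwards [hae] with ω hω
          exact Or.inl ⟨0, not_lt.1 hω⟩
      · push_neg at hb
        refine ⟨fun n => (n : ℝ≥0), fun n => pos_iff_ne_zero.2 (hb _),
          fun a b hab => by simpa using (Nat.cast_le (α := ℝ≥0)).2 hab, ae_of_all _ fun ω => ?_⟩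
        by_cases hγω : γ ω = ⊤
        · right
          have hfe : (fun n : ℕ => (((n : ℝ≥0)) : ℝ≥0∞)) = fun n : ℕ => (n : ℝ≥0∞) := by
            funext n; simp
          rw [hfe]; exact ENNReal.tendsto_nat_nhds_top
        · left
          obtain ⟨n, hn⟩ := ENNReal.exists_nat_gt hγω
          exact ⟨n, by exact_mod_cast hn.le⟩
    obtain ⟨ts, hmem, hmono, hae⟩ := hseq
    refine ⟨fun n ω => if ((ts n : ℝ≥0∞)) < γ ω then ((ts n : ℝ≥0∞)) else ⊤, ?_, ?_, ?_⟩
    · intro n u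
      by_cases hu : ((ts n : ℝ≥0∞)) ≤ (u : ℝ≥0∞)
      · have hset : {ω | (if ((ts n : ℝ≥0∞)) < γ ω then ((ts n : ℝ≥0∞)) else ⊤) ≤ (u:ℝ≥0∞)}
            = {ω | ((ts n : ℝ≥0∞)) < γ ω} := by
          ext ω
          by_cases h : ((ts n : ℝ≥0∞)) < γ ω
          · simp [h, hu]
          · simp [h]
        rw [hset]
        refine ⟨hγ measurableSet_Ioi, Or.inr (Set.inter_eq_right.2 ?_)⟩
        intro ω hω
        exact lt_of_le_of_lt hu hω
      · have hset : {ω | (if ((ts n : ℝ≥0∞)) < γ ω then ((ts n : ℝ≥0∞)) else ⊤) ≤ (u:ℝ≥0∞)}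
            = (∅ : Set Ω) := by
          ext ω
          by_cases h : ((ts n : ℝ≥0∞)) < γ ω
          · simp [h, hu]
          · simp [h]
        rw [hset]
        exact ⟨MeasurableSet.empty, Or.inl (Set.empty_inter _)⟩
    · filter_upwards [hae] with ω hω
      constructor
      · apply monotone_nat_of_le_succ
        intro k
        by_cases h : ((ts k : ℝ≥0∞)) < γ ω
        · rw [if_pos h]
          by_cases h' : ((ts (k+1) : ℝ≥0∞)) < γ ω
          · rw [if_pos h']; exact_mod_cast hmono (Nat.le_succ k)
          · rw [if_neg h']; exact le_top
        · rw [if_neg h, if_neg (not_lt.2 ((not_lt.1 h).trans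
            (ENNReal.coe_le_coe.2 (hmono (Nat.le_succ k)))))]
      · rcases hω with ⟨n, hn⟩ | htop
        · refine tendsto_const_nhds.congr' (Filter.eventually_atTop.2 ⟨n, fun k hk => ?_⟩)
          exact (if_neg (not_lt.2 (hn.trans (ENNReal.coe_le_coe.2 (hmono hk))))).symm
        · refine ENNReal.tendsto_nhds_top fun k => ?_
          filter_upwards [htop.eventually
            (eventually_gt_nhds ((ENNReal.natCast_ne_top k).lt_top))] with j hj
          by_cases h : ((ts j : ℝ≥0∞)) < γ ω
          · rw [if_pos h]; exact hj
          · rw [if_neg h]; exact (ENNReal.natCast_ne_top k).lt_top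
    · intro n
      have hcongr : ∀ ω, totalVar (fun t => stopped
            (fun (t : ℝ≥0) (ω : Ω) => if (t : ℝ≥0∞) < γ ω then (0:ℝ) else V ω)
            (fun ω => if ((ts n : ℝ≥0∞)) < γ ω then ((ts n : ℝ≥0∞)) else ⊤) t ω)
          = ((‖({ω' | γ ω' ≤ ((ts n : ℝ≥0)  : ℝ≥0∞)}.indicator V) ω‖₊ : ℝ≥0∞)) := by
        intro ω
        rw [totalVar_stopped γ V hV0]
        by_cases hω : γ ω ≤ ((ts n : ℝ≥0∞))
        · rw [if_pos ⟨by rw [if_neg (not_lt.2 hω)]; exact le_top,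
            (hω.trans_lt ENNReal.coe_lt_top).ne⟩,
            Set.indicator_of_mem (show ω ∈ {ω' | γ ω' ≤ ((ts n : ℝ≥0) : ℝ≥0∞)} from hω) V]
        · rw [if_neg, Set.indicator_of_notMem
            (show ω ∉ {ω' | γ ω' ≤ ((ts n : ℝ≥0) : ℝ≥0∞)} from hω) V]
          · simp
          · rintro ⟨h1, -⟩
            rw [if_pos (not_le.1 hω)] at h1
            exact hω h1
      rw [lintegral_congr hcongr]
      exact (hInt (ts n) (hmem n)).2

end WithMeasurableSpace

end SingleJump
end
end

section
/- Let L be an integrable random variable on (Ω, 𝒻, P). Then for every t ∈ ℝ₊ with P(γ > t) > 0 and t < t_G, the conditional expectation E[L | 𝒻_t] equals, P-a.s., the random variable taking the constant value E(L·1_{γ>t}) / P(γ > t) on the set {γ > t} and equal to L on the set {γ ≤ t}; and for every t ∈ ℝ₊ with P(γ > t) = 0, E[L | 𝒻_t] = L P-a.s. Consequently, the process M_t = F(t)·1_{t<γ} + L·1_{t≥γ}, with F(t) = E(L·1_{γ>t}) / Ḡ(t) for t < t_G and F(t) = 0 for t ≥ t_G, is a modification of the martingale (E[L | 𝒻_t])_{t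 ∈ ℝ₊}. -/
open MeasureTheory Filter Set Topology
open scoped ENNReal NNReal Classical

noncomputable section

namespace SingleJump

variable {Ω : Type*}

section WithMeasurableSpace

variable [m : MeasurableSpace Ω]

lemma measurableSet_jumpSet (γ : Ω → ℝ≥0∞) (hγ : Measurable γ) (t : ℝ≥0) :
    MeasurableSet[m] (jumpSet γ t) := hγ measurableSet_Ioi

lemma jumpσ_le (γ : Ω → ℝ≥0∞) (t : ℝ≥0) : jumpσ m γ t ≤ m :=
  MeasurableSpace.generateFrom_le fun _ hA => hA.1

lemma mem_jumpColl_of_jumpσ {γ : Ω → ℝ≥0∞} {t : ℝ≥0} {A : Set Ω}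
    (hA : MeasurableSet[jumpσ m γ t] A) : A ∈ jumpColl m γ t := by
  refine MeasurableSpace.generateFrom_induction (jumpColl m γ t)
    (fun A _ => A ∈ jumpColl m γ t) (fun A hA _ => hA) ?_ ?_ ?_ A hA
  · exact ⟨MeasurableSet.empty, Or.inl (by simp)⟩
  · rintro A _ ⟨hAm, hAc⟩
    refine ⟨hAm.compl, ?_⟩
    rcases hAc with h | h
    · right
      refine Set.inter_eq_right.mpr fun ω hω hA' => ?_
      exact absurd (Set.mem_inter hA' hω) (by rw [h]; exact Set.notMem_empty ω)
    · left
      have hsub : jumpSet γ t ⊆ A := Set.inter_eq_right.mp h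
      ext ω
      simp only [Set.mem_inter_iff, Set.mem_compl_iff, Set.mem_empty_iff_false, iff_false,
        not_and]
      exact fun hA' hω => hA' (hsub hω)
  · rintro s hsb hs
    refine ⟨MeasurableSet.iUnion fun n => (hs n).1, ?_⟩
    rw [Set.iUnion_inter]
    by_cases hall : ∀ n, s n ∩ jumpSet γ t = ∅
    · left; simp [hall]
    · push_neg at hall
      obtain ⟨n, hn⟩ := hall
      have hn' : s n ∩ jumpSet γ t = jumpSet γ t := ((hs n).2.resolve_left hn.ne_empty)
      right
      refine le_antisymm (Set.iUnion_subset fun i => Set.inter_subset_right) ?_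
      calc jumpSet γ t = s n ∩ jumpSet γ t := hn'.symm
        _ ⊆ ⋃ i, s i ∩ jumpSet γ t := Set.subset_iUnion (fun i => s i ∩ jumpSet γ t) n

lemma measurable_jumpPiece {γ : Ω → ℝ≥0∞} (hγ : Measurable γ) {t : ℝ≥0} (c : ℝ)
    {L' : Ω → ℝ} (hL' : Measurable L') :
    Measurable[jumpσ m γ t] (fun ω => if (t : ℝ≥0∞) < γ ω then c else L' ω) := by
  intro B hB
  have hpre : (fun ω => if (t : ℝ≥0∞) < γ ω then c else L' ω) ⁻¹' B
      = (if c ∈ B then jumpSet γ t else ∅) ∪ ((jumpSet γ t)ᶜ ∩ L' ⁻¹' B) := by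
    ext ω
    by_cases h : (t : ℝ≥0∞) < γ ω <;> by_cases hc : c ∈ B <;>
      simp [Set.mem_preimage, h, hc, jumpSet, Set.mem_setOf_eq]
  rw [hpre]
  have h1 : MeasurableSet[jumpσ m γ t] (if c ∈ B then jumpSet γ t else ∅) := by
    split
    · exact MeasurableSpace.measurableSet_generateFrom
        ⟨measurableSet_jumpSet γ hγ t, Or.inr (Set.inter_self _)⟩
    · exact @MeasurableSet.empty _ (jumpσ m γ t)
  have h2 : MeasurableSet[jumpσ m γ t] ((jumpSet γ t)ᶜ ∩ L' ⁻¹' B) := by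
    refine MeasurableSpace.measurableSet_generateFrom
      ⟨((measurableSet_jumpSet γ hγ t).compl).inter (hL' hB), Or.inl ?_⟩
    ext ω
    simp only [Set.mem_inter_iff, Set.mem_compl_iff, Set.mem_empty_iff_false, iff_false, not_and]
    tauto
  exact h1.union h2

lemma condexp_eq_jumpPiece (μ : Measure Ω) [IsProbabilityMeasure μ] (γ : Ω → ℝ≥0∞)
    (hγ : Measurable γ) (L : Ω → ℝ) (hL : Integrable L μ) (t : ℝ≥0) (c : ℝ)
    (hc : ∫ ω in {ω | (t : ℝ≥0∞) < γ ω}, L ω ∂μ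
      = c * (μ {ω | (t : ℝ≥0∞) < γ ω}).toReal) :
    μ[L|jumpσ m γ t] =ᵐ[μ] fun ω => if (t : ℝ≥0∞) < γ ω then c else L ω := by
  set J : Set Ω := jumpSet γ t with hJ
  have hJm : MeasurableSet J := measurableSet_jumpSet γ hγ t
  set L' : Ω → ℝ := hL.1.mk L with hL'def
  have hLL' : L =ᵐ[μ] L' := hL.1.ae_eq_mk
  have hL'm : Measurable L' := hL.1.stronglyMeasurable_mk.measurable
  have hL'int : Integrable L' μ := hL.congr hLL'
  set g : Ω → ℝ := fun ω => if (t : ℝ≥0∞) < γ ω then c else L ω with hg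
  set g' : Ω → ℝ := fun ω => if (t : ℝ≥0∞) < γ ω then c else L' ω with hg'
  have hgg' : g =ᵐ[μ] g' := by
    filter_upwards [hLL'] with ω hω
    simp only [hg, hg', hω]
  have hg'int : Integrable g' μ := by
    have heq : g' = fun ω => J.indicator (fun _ => c) ω + Jᶜ.indicator L' ω := by
      funext ω
      by_cases h : ω ∈ J
      · have h' : (t : ℝ≥0∞) < γ ω := h
        simp [hg', h, h', Set.indicator_of_mem, Set.indicator_of_notMem]
      · have h' : ¬ (t : ℝ≥0∞) < γ ω := h
        simp [hg', h, h', Set.indicator_of_notMem, Set.indicator_of_mem]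
    rw [heq]
    exact ((integrable_const c).indicator hJm).add (hL'int.indicator hJm.compl)
  have hm : jumpσ m γ t ≤ m := jumpσ_le γ t
  haveI : SigmaFinite (μ.trim hm) := by
    haveI := isFiniteMeasure_trim (μ := μ) hm
    infer_instance
  have key : g' =ᵐ[μ] μ[L|jumpσ m γ t] := by
    refine ae_eq_condExp_of_forall_setIntegral_eq hm hL
      (fun s _ _ => hg'int.integrableOn) (fun s hs _ => ?_) ?_
    · obtain ⟨hsm, hscase⟩ := mem_jumpColl_of_jumpσ hs
      have hsplit : ∀ f : Ω → ℝ, Integrable f μ →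
          ∫ x in s, f x ∂μ = (∫ x in s ∩ J, f x ∂μ) + ∫ x in s ∩ Jᶜ, f x ∂μ := by
        intro f hf
        rw [← setIntegral_union
          (Disjoint.mono Set.inter_subset_right Set.inter_subset_right disjoint_compl_right)
          (hsm.inter hJm.compl) hf.integrableOn hf.integrableOn,
          Set.inter_union_compl]
      rw [hsplit g' hg'int, hsplit L hL]
      have hcompl : ∫ x in s ∩ Jᶜ, g' x ∂μ = ∫ x in s ∩ Jᶜ, L x ∂μ := by
        have h1 : ∫ x in s ∩ Jᶜ, g' x ∂μ = ∫ x in s ∩ Jᶜ, L' x ∂μ := by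
          refine setIntegral_congr_fun (hsm.inter hJm.compl) fun ω hω => ?_
          have : ¬ (t : ℝ≥0∞) < γ ω := hω.2
          simp [hg', this]
        rw [h1]
        exact (setIntegral_congr_ae (hsm.inter hJm.compl)
          (by filter_upwards [hLL'] with ω hω _ using hω.symm))
      rw [hcompl]
      congr 1
      rcases hscase with h | h
      · rw [h]; simp
      · rw [h]
        have h2 : ∫ x in J, g' x ∂μ = ∫ x in J, (c : ℝ) ∂μ := by
          refine setIntegral_congr_fun hJm fun ω hω => ?_
          have : (t : ℝ≥0∞) < γ ω := hω
          simp [hg', this]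
        rw [h2, setIntegral_const, smul_eq_mul, mul_comm]
        exact hc.symm
    · exact (Measurable.stronglyMeasurable
        (measurable_jumpPiece hγ c hL'm)).aestronglyMeasurable
  exact key.symm.trans hgg'.symm

lemma lt_tG_of_pos (μ : Measure Ω) [IsProbabilityMeasure μ] (γ : Ω → ℝ≥0∞)
    (hγ : Measurable γ) (t : ℝ≥0) (h : 0 < μ {ω | (t : ℝ≥0∞) < γ ω}) :
    (t : ℝ≥0∞) < tG μ γ := by
  have hU : {ω | (t : ℝ≥0∞) < γ ω}
      = ⋃ n : ℕ, {ω | ((t + ((n : ℝ≥0) + 1)⁻¹ : ℝ≥0) : ℝ≥0∞) < γ ω} := by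
    ext ω
    simp only [Set.mem_setOf_eq, Set.mem_iUnion]
    constructor
    · intro hω
      rcases eq_top_or_lt_top (γ ω) with htop | hlt
      · exact ⟨0, by rw [htop]; exact ENNReal.coe_lt_top⟩
      · lift γ ω to ℝ≥0 using hlt.ne with y hy
        rw [ENNReal.coe_lt_coe] at hω
        have hyt : (0 : ℝ≥0) < y - t := tsub_pos_of_lt hω
        obtain ⟨n, hn⟩ := exists_nat_one_div_lt hyt
        refine ⟨n, ?_⟩
        rw [ENNReal.coe_lt_coe]
        have : t + ((n : ℝ≥0) + 1)⁻¹ < t + (y - t) := by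
          rw [← one_div]
          exact (add_lt_add_iff_left t).mpr hn
        rwa [add_tsub_cancel_of_le hω.le] at this
    · rintro ⟨n, hn⟩
      exact lt_of_le_of_lt (by exact_mod_cast le_self_add) hn
  rw [hU] at h
  have hex : ∃ n : ℕ, 0 < μ {ω | ((t + ((n : ℝ≥0) + 1)⁻¹ : ℝ≥0) : ℝ≥0∞) < γ ω} := by
    by_contra hcon
    push_neg at hcon
    have : μ (⋃ n : ℕ, {ω | ((t + ((n : ℝ≥0) + 1)⁻¹ : ℝ≥0) : ℝ≥0∞) < γ ω}) = 0 :=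
      measure_iUnion_null fun n => le_antisymm (hcon n) zero_le
    rw [this] at h
    exact lt_irrefl 0 h
  obtain ⟨n, hn⟩ := hex
  set s : ℝ≥0 := t + ((n : ℝ≥0) + 1)⁻¹ with hs
  have hts : t < s := lt_add_of_pos_right t (by positivity)
  have hmem : s ∈ {u : ℝ≥0 | μ {ω | γ ω ≤ (u : ℝ≥0∞)} < 1} := by
    have hcompl : {ω | γ ω ≤ (s : ℝ≥0∞)} = (jumpSet γ s)ᶜ := by
      ext ω; simp [jumpSet, not_lt]
    rw [Set.mem_setOf_eq, hcompl,
      measure_compl (measurableSet_jumpSet γ hγ s) (measure_ne_top μ _),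
      measure_univ]
    exact ENNReal.sub_lt_self ENNReal.one_ne_top one_ne_zero hn.ne'
  calc (t : ℝ≥0∞) < (s : ℝ≥0∞) := by exact_mod_cast hts
    _ ≤ tG μ γ := le_sSup ⟨s, hmem, rfl⟩

/-- For an integrable `L`: if `P(γ > t) > 0` and `t < t_G` then `E[L | 𝒻_t]` equals a.s.
`E(L·1_{γ>t})/P(γ>t)` on `{γ > t}` and `L` on `{γ ≤ t}`; if `P(γ > t) = 0` then
`E[L | 𝒻_t] = L` a.s. Consequently `M_t = F(t)·1_{t<γ} + L·1_{t≥γ}`, with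
`F(t) = E(L·1_{γ>t})/Ḡ(t)` for `t < t_G` and `F(t) = 0` otherwise, is a modification of
the martingale `(E[L | 𝒻_t])`. -/
theorem stmt_19 (μ : Measure Ω) [IsProbabilityMeasure μ] (γ : Ω → ℝ≥0∞)
    (hγ : Measurable γ) (hpos : 0 < μ {ω | 0 < γ ω})
    (L : Ω → ℝ) (hL : Integrable L μ) :
    (∀ t : ℝ≥0, 0 < μ {ω | (t : ℝ≥0∞) < γ ω} → (t : ℝ≥0∞) < tG μ γ →
      μ[L|jumpσ m γ t] =ᵐ[μ]
        fun ω => if (t : ℝ≥0∞) < γ ω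
          then (∫ ω' in {ω' | (t : ℝ≥0∞) < γ ω'}, L ω' ∂μ) / Gbar μ γ t
          else L ω) ∧
    (∀ t : ℝ≥0, μ {ω | (t : ℝ≥0∞) < γ ω} = 0 → μ[L|jumpσ m γ t] =ᵐ[μ] L) ∧
    (∀ t : ℝ≥0,
      (fun ω => if (t : ℝ≥0∞) < γ ω
          then (if (t : ℝ≥0∞) < tG μ γ
            then (∫ ω' in {ω' | (t : ℝ≥0∞) < γ ω'}, L ω' ∂μ) / Gbar μ γ t else 0)
          else L ω)
        =ᵐ[μ] μ[L|jumpσ m γ t]) := by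
  have hpart1 : ∀ t : ℝ≥0, 0 < μ {ω | (t : ℝ≥0∞) < γ ω} →
      μ[L|jumpσ m γ t] =ᵐ[μ]
        fun ω => if (t : ℝ≥0∞) < γ ω
          then (∫ ω' in {ω' | (t : ℝ≥0∞) < γ ω'}, L ω' ∂μ) / Gbar μ γ t
          else L ω := by
    intro t ht
    have hGpos : 0 < Gbar μ γ t :=
      ENNReal.toReal_pos ht.ne' (measure_ne_top μ _)
    refine condexp_eq_jumpPiece μ γ hγ L hL t _ ?_
    have hGdef : (μ {ω | (t : ℝ≥0∞) < γ ω}).toReal = Gbar μ γ t := rfl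
    rw [hGdef, div_mul_cancel₀ _ hGpos.ne']
  have hpart2 : ∀ t : ℝ≥0, μ {ω | (t : ℝ≥0∞) < γ ω} = 0 →
      μ[L|jumpσ m γ t] =ᵐ[μ] L := by
    intro t ht
    have h0 : μ[L|jumpσ m γ t] =ᵐ[μ]
        fun ω => if (t : ℝ≥0∞) < γ ω then (0 : ℝ) else L ω := by
      refine condexp_eq_jumpPiece μ γ hγ L hL t 0 ?_
      have hr : μ.restrict {ω | (t : ℝ≥0∞) < γ ω} = 0 := Measure.restrict_eq_zero.mpr ht
      rw [hr, integral_zero_measure, zero_mul]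
    have hae : ∀ᵐ ω ∂μ, ¬ (t : ℝ≥0∞) < γ ω := by
      rw [ae_iff]
      simpa using ht
    refine h0.trans ?_
    filter_upwards [hae] with ω hω
    simp [hω]
  refine ⟨fun t ht _ => hpart1 t ht, hpart2, fun t => ?_⟩
  by_cases ht : 0 < μ {ω | (t : ℝ≥0∞) < γ ω}
  · have htG : (t : ℝ≥0∞) < tG μ γ := lt_tG_of_pos μ γ hγ t ht
    simp only [if_pos htG]
    exact (hpart1 t ht).symm
  · have h0 : μ {ω | (t : ℝ≥0∞) < γ ω} = 0 := le_antisymm (not_lt.mp ht) zero_le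
    have hae : ∀ᵐ ω ∂μ, ¬ (t : ℝ≥0∞) < γ ω := by
      rw [ae_iff]
      simpa using h0
    refine EventuallyEq.trans ?_ (hpart2 t h0).symm
    filter_upwards [hae] with ω hω
    simp [hω]

end WithMeasurableSpace

end SingleJump
end
end
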